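/- With α real, |α|<1, f(λ)=1/|1-αe^{-iλ}|², and S₄ = {-5,-4,-3,0,1}: the spectral characteristic h₄(e^{iλ}) = Σ_{j∈S₄} a(j)e^{ijλ} − (Σ_{j∈S₄} c(j)e^{ijλ})(1+α² − αe^{iλ} − αe^{-iλ}) simplifies, for c solving the Toeplitz system, to h₄(e^{iλ}) = α c(1)e^{2iλ} + α c(0)e^{-iλ} + α c(-3)e^{-2iλ} + α c(-5)e^{-6iλ}. -/
import Mathlib


open Real Complex

/-- Simplification of the spectral characteristic `h₄` for the real AR(1)
sequence and the missing set `S₄ = {-5,-4,-3,0,1}`: after using the Toeplitz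
equations for `c`, only the four terms supported outside `S₄` remain. -/
theorem ar1_spectral_characteristic_simplification
    (α : ℝ) (hα : |α| < 1) (a c b : ℤ → ℝ)
    (hb : ∀ m : ℤ, b m = if m = 0 then 1 + α ^ 2
      else if m = 1 ∨ m = -1 then -α else 0)
    (hc : ∀ n ∈ ({-5, -4, -3, 0, 1} : Finset ℤ),
      ∑ j ∈ ({-5, -4, -3, 0, 1} : Finset ℤ), b (n - j) * c j = a n) :
    ∀ lam : ℝ,
      (∑ j ∈ ({-5, -4, -3, 0, 1} : Finset ℤ),
          (a j : ℂ) * Complex.exp (Complex.I * j * lam)) -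
        (∑ j ∈ ({-5, -4, -3, 0, 1} : Finset ℤ),
          (c j : ℂ) * Complex.exp (Complex.I * j * lam)) *
          (1 + (α : ℂ) ^ 2 - (α : ℂ) * Complex.exp (Complex.I * lam)
            - (α : ℂ) * Complex.exp (-(Complex.I * lam))) =
      (α : ℂ) * (c 1 : ℂ) * Complex.exp (2 * Complex.I * lam) +
        (α : ℂ) * (c 0 : ℂ) * Complex.exp (-(Complex.I * lam)) +
        (α : ℂ) * (c (-3) : ℂ) * Complex.exp (-(2 * Complex.I * lam)) +
        (α : ℂ) * (c (-5) : ℂ) * Complex.exp (-(6 * Complex.I * lam)) := by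
  have h1 := hc (-5) (by norm_num)
  have h2 := hc (-4) (by norm_num)
  have h3 := hc (-3) (by norm_num)
  have h4 := hc 0 (by norm_num)
  have h5 := hc 1 (by norm_num)
  simp only [hb] at h1 h2 h3 h4 h5
  norm_num [Finset.sum_insert, Finset.mem_insert] at h1 h2 h3 h4 h5
  intro lam
  set z := Complex.exp (Complex.I * lam) with hz
  have hzne : z ≠ 0 := Complex.exp_ne_zero _
  set u := Complex.exp (-(Complex.I * lam)) with huu
  have hu : u = z⁻¹ := by
    apply eq_inv_of_mul_eq_one_right
    rw [hz, huu, ← Complex.exp_add]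
    norm_num
  have pw : ∀ (k : ℕ) (r : ℂ), Complex.exp ((k : ℂ) * r) = Complex.exp r ^ k :=
    fun k r => Complex.exp_nat_mul r k
  have k5 : Complex.exp (-(Complex.I * 5 * (lam : ℂ))) = u ^ 5 := by
    rw [show -(Complex.I * 5 * (lam : ℂ)) = ((5 : ℕ) : ℂ) * (-(Complex.I * lam)) by
      push_cast; ring, pw]
  have k4 : Complex.exp (-(Complex.I * 4 * (lam : ℂ))) = u ^ 4 := by
    rw [show -(Complex.I * 4 * (lam : ℂ)) = ((4 : ℕ) : ℂ) * (-(Complex.I * lam)) by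
      push_cast; ring, pw]
  have k3 : Complex.exp (-(Complex.I * 3 * (lam : ℂ))) = u ^ 3 := by
    rw [show -(Complex.I * 3 * (lam : ℂ)) = ((3 : ℕ) : ℂ) * (-(Complex.I * lam)) by
      push_cast; ring, pw]
  have r2 : Complex.exp (2 * Complex.I * (lam : ℂ)) = z ^ 2 := by
    rw [show 2 * Complex.I * (lam : ℂ) = ((2 : ℕ) : ℂ) * (Complex.I * lam) by
      push_cast; ring, pw]
  have rm2 : Complex.exp (-(2 * Complex.I * (lam : ℂ))) = u ^ 2 := by
    rw [show -(2 * Complex.I * (lam : ℂ)) = ((2 : ℕ) : ℂ) * (-(Complex.I * lam)) by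
      push_cast; ring, pw]
  have rm6 : Complex.exp (-(6 * Complex.I * (lam : ℂ))) = u ^ 6 := by
    rw [show -(6 * Complex.I * (lam : ℂ)) = ((6 : ℕ) : ℂ) * (-(Complex.I * lam)) by
      push_cast; ring, pw]
  norm_num [Finset.sum_insert, Finset.mem_insert]
  rw [k5, k4, k3, r2, rm2, rm6, ← h1, ← h2, ← h3, ← h4, ← h5, hu]
  push_cast
  field_simp [hzne]
  ring_nf
  field_simp [hzne]
  ring
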